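/- arXiv:2605.27793 — 3 statements merged into one kernel-verified Lean document; each statement's English description precedes it below -/
import Mathlib

section
/- Let f_j : [-δ, δ] → ℝ be a sequence of monotone increasing functions such that for some λ > 0 and all j and all x ∈ [-δ, δ], f_j(x) > x + λ x^{2k} + ε (where k ≥ 1 and ε > 0). Then there exists a constant C₁ > 0 (depending only on λ, k, δ, but not on ε) and ε₀ > 0 such that for all 0 < ε < ε₀, setting N₁ = ⌈C₁ ε^{-(2k-1)/(2k)}⌉, the composition f_{N₁} ∘ ⋯ ∘ f_1 applied to -δ is at least δ. -/
/-- Orbit under a sequence of maps: `orb f x n = f (n-1) (⋯ (f 0 x))`. -/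
noncomputable def orb (f : ℕ → ℝ → ℝ) (x : ℝ) : ℕ → ℝ
  | 0 => x
  | n + 1 => f n (orb f x n)


/-- comparison sequence -/
noncomputable def Yseq (lam ε x0 : ℝ) (k : ℕ) : ℕ → ℝ
  | 0 => x0
  | n + 1 => Yseq lam ε x0 k n + lam * (Yseq lam ε x0 k n) ^ (2 * k) + ε

lemma Yseq_zero (lam ε x0 : ℝ) (k : ℕ) : Yseq lam ε x0 k 0 = x0 := rfl

lemma Yseq_succ (lam ε x0 : ℝ) (k : ℕ) (n : ℕ) :
    Yseq lam ε x0 k (n + 1)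
      = Yseq lam ε x0 k n + lam * (Yseq lam ε x0 k n) ^ (2 * k) + ε := rfl

lemma gain_nonneg (lam ε : ℝ) (hlam : 0 ≤ lam) (hε : 0 ≤ ε) (k : ℕ) (y : ℝ) :
    0 ≤ lam * y ^ (2 * k) + ε := by
  have h1 : 0 ≤ y ^ (2 * k) := (even_two_mul k).pow_nonneg y
  nlinarith

lemma Yseq_mono (lam ε x0 : ℝ) (hlam : 0 ≤ lam) (hε : 0 ≤ ε) (k : ℕ) :
    Monotone (Yseq lam ε x0 k) := by
  apply monotone_nat_of_le_succ
  intro n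
  rw [Yseq_succ]
  have := gain_nonneg lam ε hlam hε k (Yseq lam ε x0 k n)
  linarith

lemma Yseq_reach (lam ε x0 : ℝ) (hlam : 0 ≤ lam) (hε : 0 ≤ ε) (k : ℕ)
    (a b G : ℝ) (hG : 0 < G)
    (hcross : ∀ t, a ≤ t → t < b → G ≤ lam * t ^ (2 * k) + ε)
    (m : ℕ) (ha : a ≤ Yseq lam ε x0 k m) :
    ∀ s : ℕ, min b (a + s * G) ≤ Yseq lam ε x0 k (m + s) := by
  intro s
  induction s with
  | zero => simpa using min_le_of_right_le ha
  | succ s ih =>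
      have hmono := Yseq_mono lam ε x0 hlam hε k
      have haY : a ≤ Yseq lam ε x0 k (m + s) :=
        le_trans ha (hmono (Nat.le_add_right m s))
      by_cases hb : b ≤ Yseq lam ε x0 k (m + s)
      · have h1 : Yseq lam ε x0 k (m + s) ≤ Yseq lam ε x0 k (m + (s + 1)) :=
          hmono (by omega)
        exact le_trans (min_le_left _ _) (le_trans hb h1)
      · push_neg at hb
        have hG2 : G ≤ lam * (Yseq lam ε x0 k (m + s)) ^ (2 * k) + ε :=
          hcross _ haY hb
        have hstep : Yseq lam ε x0 k (m + s) + G ≤ Yseq lam ε x0 k (m + (s + 1)) := by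
          have : m + (s + 1) = (m + s) + 1 := by omega
          rw [this, Yseq_succ]; linarith
        have h2 : min b (a + s * G) + G ≤ Yseq lam ε x0 k (m + (s + 1)) := by
          linarith [ih, hstep, hG2]
        rcases le_total b (a + s * G) with h | h
        · calc min b (a + (s + 1 : ℕ) * G) ≤ b := min_le_left _ _
            _ ≤ b + G := by linarith [hG.le]
            _ = min b (a + s * G) + G := by rw [min_eq_left h]
            _ ≤ _ := h2
        · calc min b (a + (s + 1 : ℕ) * G) ≤ a + (s + 1 : ℕ) * G := min_le_right _ _
            _ = (a + s * G) + G := by push_cast; ring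
            _ = min b (a + s * G) + G := by rw [min_eq_right h]
            _ ≤ _ := h2

lemma Yseq_cross (lam ε x0 : ℝ) (hlam : 0 ≤ lam) (hε : 0 ≤ ε) (k : ℕ)
    (a b G : ℝ) (hG : 0 < G) (hab : a ≤ b)
    (hcross : ∀ t, a ≤ t → t < b → G ≤ lam * t ^ (2 * k) + ε)
    (m : ℕ) (ha : a ≤ Yseq lam ε x0 k m) :
    ∃ n : ℕ, (n : ℝ) ≤ (m : ℝ) + (b - a) / G + 1 ∧ b ≤ Yseq lam ε x0 k n := by
  set s := ⌈(b - a) / G⌉₊ with hs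
  refine ⟨m + s, ?_, ?_⟩
  · have h0 : (0:ℝ) ≤ (b - a) / G := div_nonneg (by linarith) hG.le
    have := Nat.ceil_lt_add_one h0
    push_cast
    linarith
  · have hr := Yseq_reach lam ε x0 hlam hε k a b G hG hcross m ha s
    have hsG : b - a ≤ s * G := by
      have h1 : (b - a) / G ≤ (s : ℝ) := Nat.le_ceil _
      rw [div_le_iff₀ hG] at h1
      linarith
    have : min b (a + s * G) = b := min_eq_left (by linarith)
    rwa [this] at hr


lemma key_arith (q j : ℕ) (hq : 1 ≤ q) (D : ℝ) (hD : 0 < D) :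
    2 ^ (q * (j + 1)) / D + 2 / D * 2 ^ (q * j) ≤ 2 / D * 2 ^ (q * (j + 1)) := by
  have key : (2:ℝ) ^ (q * (j + 1)) + 2 * 2 ^ (q * j) ≤ 2 * 2 ^ (q * (j + 1)) := by
    have e : q * (j + 1) = q * j + q := by ring
    have h2 : (2:ℝ) ^ 1 ≤ 2 ^ q := pow_le_pow_right₀ one_le_two hq
    rw [e, pow_add]
    nlinarith [pow_pos (two_pos : (0:ℝ) < 2) (q * j)]
  calc 2 ^ (q * (j + 1)) / D + 2 / D * 2 ^ (q * j)
      = (2 ^ (q * (j + 1)) + 2 * 2 ^ (q * j)) / D := by ring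
    _ ≤ (2 * 2 ^ (q * (j + 1))) / D := by gcongr
    _ = 2 / D * 2 ^ (q * (j + 1)) := by ring

lemma pow_div_gain (k : ℕ) (hk : 1 ≤ k) (δ lam : ℝ) (hδ : 0 < δ) (hlam : 0 < lam) (j : ℕ) :
    (δ / 2 ^ (j + 1)) / (lam * (δ / 2 ^ (j + 1)) ^ (2 * k))
      = 2 ^ ((2 * k - 1) * (j + 1)) / (lam * δ ^ (2 * k - 1)) := by
  set q := 2 * k - 1 with hq
  have hqk : 2 * k = q + 1 := by omega
  set A : ℝ := δ / 2 ^ (j + 1) with hA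
  have hApos : 0 < A := by positivity
  have hAq : A ^ q = δ ^ q / 2 ^ (q * (j + 1)) := by
    rw [hA, div_pow]
    congr 1
    rw [← pow_mul, mul_comm]
  rw [hqk, pow_succ, hAq]
  field_simp

lemma climbNeg (k : ℕ) (hk : 1 ≤ k) (δ lam ε : ℝ) (hδ : 0 < δ) (hlam : 0 < lam)
    (hε : 0 < ε) :
    ∀ j : ℕ, ∃ n : ℕ,
      (n : ℝ) ≤ j + 2 / (lam * δ ^ (2 * k - 1)) * 2 ^ ((2 * k - 1) * j)
      ∧ -(δ / 2 ^ j) ≤ Yseq lam ε (-δ) k n := by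
  have hq : 1 ≤ 2 * k - 1 := by omega
  have hD : 0 < lam * δ ^ (2 * k - 1) := by positivity
  intro j
  induction j with
  | zero =>
      refine ⟨0, by push_cast; positivity, ?_⟩
      simp [Yseq_zero]
  | succ j ih =>
      obtain ⟨n, hn, hY⟩ := ih
      have hApos : (0:ℝ) < δ / 2 ^ (j + 1) := by positivity
      have hG : 0 < lam * (δ / 2 ^ (j + 1)) ^ (2 * k) := by positivity
      have hab : -(δ / 2 ^ j) ≤ -(δ / 2 ^ (j + 1)) := by
        have : δ / 2 ^ (j+1) ≤ δ / 2 ^ j := by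
          gcongr
          · exact one_le_two
          · omega
        linarith
      have hcross : ∀ t, -(δ / 2 ^ j) ≤ t → t < -(δ / 2 ^ (j + 1)) →
          lam * (δ / 2 ^ (j + 1)) ^ (2 * k) ≤ lam * t ^ (2 * k) + ε := by
        intro t _ ht
        have h1 : δ / 2 ^ (j + 1) ≤ -t := by linarith
        have h2 : (δ / 2 ^ (j + 1)) ^ (2 * k) ≤ (-t) ^ (2 * k) :=
          pow_le_pow_left₀ hApos.le h1 _
        rw [(even_two_mul k).neg_pow] at h2
        nlinarith
      obtain ⟨n', hn', hY'⟩ := Yseq_cross lam ε (-δ) hlam.le hε.le k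
        (-(δ / 2 ^ j)) (-(δ / 2 ^ (j + 1))) (lam * (δ / 2 ^ (j + 1)) ^ (2 * k))
        hG hab hcross n hY
      refine ⟨n', ?_, hY'⟩
      have hba : -(δ / 2 ^ (j + 1)) - -(δ / 2 ^ j) = δ / 2 ^ (j + 1) := by
        field_simp
        ring
      rw [hba, pow_div_gain k hk δ lam hδ hlam j] at hn'
      have hk2 := key_arith (2 * k - 1) j hq (lam * δ ^ (2 * k - 1)) hD
      push_cast at hn' ⊢
      linarith

lemma climbPos (k : ℕ) (hk : 1 ≤ k) (δ lam ε : ℝ) (hδ : 0 < δ) (hlam : 0 < lam)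
    (hε : 0 < ε) :
    ∀ j : ℕ, ∀ m : ℕ, δ / 2 ^ j ≤ Yseq lam ε (-δ) k m → ∃ n : ℕ,
      (n : ℝ) ≤ m + j + 2 / (lam * δ ^ (2 * k - 1)) * 2 ^ ((2 * k - 1) * j)
      ∧ δ ≤ Yseq lam ε (-δ) k n := by
  have hq : 1 ≤ 2 * k - 1 := by omega
  have hD : 0 < lam * δ ^ (2 * k - 1) := by positivity
  intro j
  induction j with
  | zero =>
      intro m hm
      have h2 : (0:ℝ) ≤ 2 / (lam * δ ^ (2 * k - 1)) := by positivity
      refine ⟨m, ?_, by simpa using hm⟩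
      push_cast
      simp only [Nat.mul_zero, pow_zero, mul_one]
      linarith
  | succ j ih =>
      intro m hm
      have hApos : (0:ℝ) < δ / 2 ^ (j + 1) := by positivity
      have hG : 0 < lam * (δ / 2 ^ (j + 1)) ^ (2 * k) := by positivity
      have hab : δ / 2 ^ (j + 1) ≤ δ / 2 ^ j := by
        gcongr
        · exact one_le_two
        · omega
      have hcross : ∀ t, δ / 2 ^ (j + 1) ≤ t → t < δ / 2 ^ j →
          lam * (δ / 2 ^ (j + 1)) ^ (2 * k) ≤ lam * t ^ (2 * k) + ε := by
        intro t ht _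
        have h2 : (δ / 2 ^ (j + 1)) ^ (2 * k) ≤ t ^ (2 * k) :=
          pow_le_pow_left₀ hApos.le ht _
        nlinarith
      obtain ⟨n₁, hn₁, hY₁⟩ := Yseq_cross lam ε (-δ) hlam.le hε.le k
        (δ / 2 ^ (j + 1)) (δ / 2 ^ j) (lam * (δ / 2 ^ (j + 1)) ^ (2 * k))
        hG hab hcross m hm
      obtain ⟨n, hn, hY⟩ := ih n₁ hY₁
      refine ⟨n, ?_, hY⟩
      have hba : δ / 2 ^ j - δ / 2 ^ (j + 1) = δ / 2 ^ (j + 1) := by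
        field_simp
        ring
      rw [hba, pow_div_gain k hk δ lam hδ hlam j] at hn₁
      have hk2 := key_arith (2 * k - 1) j hq (lam * δ ^ (2 * k - 1)) hD
      push_cast at hn hn₁ ⊢
      linarith

theorem stmt0 (k : ℕ) (hk : 1 ≤ k) (δ lam : ℝ) (hδ : 0 < δ) (hlam : 0 < lam)
    (f : ℕ → ℝ → ℝ) (hmono : ∀ j, MonotoneOn (f j) (Set.Icc (-δ) δ)) :
    ∃ C₁ > (0 : ℝ), ∃ ε₀ > (0 : ℝ), ∀ ε : ℝ, 0 < ε → ε < ε₀ →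
      (∀ j, ∀ x ∈ Set.Icc (-δ) δ, x + lam * x ^ (2 * k) + ε < f j x) →
      ∃ n ≤ ⌈C₁ * ε ^ (-(((2 * k : ℝ) - 1) / (2 * k)))⌉₊,
        δ ≤ orb f (-δ) n := by
  have hk1 : (1:ℝ) ≤ (k:ℝ) := by exact_mod_cast hk
  have h2k : (2 * (k:ℝ)) ≠ 0 := by positivity
  refine ⟨4 * δ + 4 * 2 ^ (2 * k - 1) / lam + 3, by positivity,
    min 1 (δ ^ (2 * k)), by positivity, ?_⟩
  intro ε hε hεlt hstep
  by_contra hcon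
  push_neg at hcon
  set N₁ := ⌈(4 * δ + 4 * 2 ^ (2 * k - 1) / lam + 3) * ε ^ (-(((2 * k : ℝ) - 1) / (2 * k)))⌉₊
    with hN₁
  set E := ε ^ (-(((2 * k : ℝ) - 1) / (2 * k))) with hE_def
  set r := ε ^ (((2 * k : ℝ))⁻¹) with hr_def
  have hε1 : ε ≤ 1 := le_of_lt (lt_of_lt_of_le hεlt (min_le_left _ _))
  have hεδ : ε ≤ δ ^ (2 * k) := le_of_lt (lt_of_lt_of_le hεlt (min_le_right _ _))
  have hrpos : 0 < r := Real.rpow_pos_of_pos hε _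
  have hEpos : 0 < E := Real.rpow_pos_of_pos hε _
  have hE1 : 1 ≤ E := by
    apply Real.one_le_rpow_of_pos_of_le_one_of_nonpos hε hε1
    rw [neg_nonpos]
    apply div_nonneg (by linarith) (by positivity)
  have hrδ : r ≤ δ := by
    have h1 : r ≤ (δ ^ (2 * k)) ^ (((2 * k : ℝ))⁻¹) :=
      Real.rpow_le_rpow hε.le hεδ (by positivity)
    have h2 : (δ ^ (2 * k)) ^ (((2 * k : ℝ))⁻¹) = δ := by
      rw [← Real.rpow_natCast δ (2 * k), ← Real.rpow_mul hδ.le]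
      push_cast
      rw [mul_inv_cancel₀ h2k, Real.rpow_one]
    rwa [h2] at h1
  -- the scale M
  set M := ⌈Real.logb 2 (δ / r)⌉₊ with hM_def
  have h2M : δ / 2 ^ M ≤ r := by
    have hlb : Real.logb 2 (δ / r) ≤ (M : ℝ) := Nat.le_ceil _
    have h1 : δ / r ≤ (2:ℝ) ^ (M:ℝ) := by
      have := Real.rpow_le_rpow_of_exponent_le one_le_two hlb
      rwa [Real.rpow_logb two_pos (by norm_num) (by positivity)] at this
    rw [Real.rpow_natCast] at h1
    rw [div_le_iff₀ (by positivity)] at h1 ⊢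
    rw [mul_comm]
    exact h1
  have h2M' : (2:ℝ) ^ M ≤ 2 * δ / r := by
    rcases Nat.eq_zero_or_pos M with h0 | h1
    · rw [h0, pow_zero, le_div_iff₀ hrpos]
      linarith
    · have hlt : ((M - 1 : ℕ) : ℝ) < Real.logb 2 (δ / r) := by
        rw [← Nat.lt_ceil]
        omega
      have h2 : (2:ℝ) ^ ((M - 1 : ℕ) : ℝ) < (2:ℝ) ^ Real.logb 2 (δ / r) :=
        Real.rpow_lt_rpow_of_exponent_lt one_lt_two hlt
      rw [Real.rpow_logb two_pos (by norm_num) (by positivity),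
        Real.rpow_natCast] at h2
      have hMe : M = (M - 1) + 1 := by omega
      rw [hMe, pow_succ, le_div_iff₀ hrpos]
      rw [lt_div_iff₀ hrpos] at h2
      linarith
  -- exponent identities
  have hqc : ((2 * k - 1 : ℕ) : ℝ) = 2 * (k:ℝ) - 1 := by
    have h1 : (1:ℕ) ≤ 2 * k := by omega
    push_cast [Nat.cast_sub h1]
    ring
  have hE_eq : E = (r ^ (2 * k - 1))⁻¹ := by
    rw [hr_def, ← Real.rpow_natCast (ε ^ (((2 * k : ℝ))⁻¹)) (2 * k - 1),
      ← Real.rpow_mul hε.le, ← Real.rpow_neg hε.le, hE_def]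
    congr 1
    rw [hqc]
    field_simp
  have hmid : 2 * r / ε = 2 * E := by
    have h1 : r / ε = ε ^ ((((2 * k : ℝ))⁻¹) - 1) := by
      rw [hr_def]
      rw [Real.rpow_sub hε, Real.rpow_one]
    have h2 : (((2 * k : ℝ))⁻¹) - 1 = -(((2 * k : ℝ) - 1) / (2 * k)) := by
      field_simp
      ring
    rw [mul_div_assoc, h1, h2, ← hE_def]
  have hMB : (M : ℝ) ≤ 2 * δ * E := by
    have h1 : (M : ℝ) ≤ (2:ℝ) ^ M := by
      exact_mod_cast (Nat.lt_two_pow_self (n := M)).le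
    have h2 : r⁻¹ ≤ E := by
      rw [hr_def, ← Real.rpow_neg hε.le, hE_def]
      apply Real.rpow_le_rpow_of_exponent_ge hε hε1
      rw [neg_le_neg_iff, inv_eq_one_div]
      gcongr <;> linarith
    have h3 : 2 * δ / r ≤ 2 * δ * E := by
      rw [div_eq_mul_inv]
      have : (0:ℝ) ≤ 2 * δ := by linarith
      nlinarith
    linarith
  have hkey1 : 2 / (lam * δ ^ (2 * k - 1)) * 2 ^ ((2 * k - 1) * M)
      ≤ 2 * 2 ^ (2 * k - 1) / lam * E := by
    have h1 : (2:ℝ) ^ ((2 * k - 1) * M) = ((2:ℝ) ^ M) ^ (2 * k - 1) := by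
      rw [← pow_mul, mul_comm]
    have h2 : ((2:ℝ) ^ M) ^ (2 * k - 1) ≤ (2 * δ / r) ^ (2 * k - 1) :=
      pow_le_pow_left₀ (by positivity) h2M' _
    have h3 : (2 * δ / r) ^ (2 * k - 1)
        = 2 ^ (2 * k - 1) * δ ^ (2 * k - 1) / r ^ (2 * k - 1) := by
      rw [div_pow, mul_pow]
    have h4 : 2 / (lam * δ ^ (2 * k - 1))
        * (2 ^ (2 * k - 1) * δ ^ (2 * k - 1) / r ^ (2 * k - 1))
        = 2 * 2 ^ (2 * k - 1) / lam * (r ^ (2 * k - 1))⁻¹ := by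
      have hδq : (δ:ℝ) ^ (2 * k - 1) ≠ 0 := by positivity
      have hrq : (r:ℝ) ^ (2 * k - 1) ≠ 0 := by positivity
      field_simp
    have h5 : (0:ℝ) < 2 / (lam * δ ^ (2 * k - 1)) := by positivity
    calc 2 / (lam * δ ^ (2 * k - 1)) * 2 ^ ((2 * k - 1) * M)
        ≤ 2 / (lam * δ ^ (2 * k - 1))
          * (2 ^ (2 * k - 1) * δ ^ (2 * k - 1) / r ^ (2 * k - 1)) := by
          rw [h1]
          exact mul_le_mul_of_nonneg_left (le_trans h2 (le_of_eq h3)) h5.le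
      _ = 2 * 2 ^ (2 * k - 1) / lam * (r ^ (2 * k - 1))⁻¹ := h4
      _ = 2 * 2 ^ (2 * k - 1) / lam * E := by rw [← hE_eq]
  -- the climbs
  obtain ⟨n₁, hn₁, hY₁⟩ := climbNeg k hk δ lam ε hδ hlam hε M
  have hY₁' : -r ≤ Yseq lam ε (-δ) k n₁ := by linarith
  obtain ⟨n₂, hn₂, hY₂⟩ := Yseq_cross lam ε (-δ) hlam.le hε.le k (-r) r ε hε
    (by linarith)
    (by
      intro t _ _
      have := gain_nonneg lam ε hlam.le hε.le k t
      nlinarith [(even_two_mul k).pow_nonneg t, hlam.le])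
    n₁ hY₁'
  obtain ⟨n₃, hn₃, hY₃⟩ := climbPos k hk δ lam ε hδ hlam hε M n₂
    (le_trans h2M hY₂)
  -- total bound
  have hsub : r - -r = 2 * r := by ring
  rw [hsub] at hn₂
  have htot : (n₃ : ℝ) ≤ (4 * δ + 4 * 2 ^ (2 * k - 1) / lam + 3) * E := by
    have e1 : (4 * δ + 4 * 2 ^ (2 * k - 1) / lam + 3) * E
        = 4 * (δ * E) + 4 * (2 ^ (2 * k - 1) / lam * E) + 3 * E := by ring
    have e2 : 2 * 2 ^ (2 * k - 1) / lam * E = 2 * (2 ^ (2 * k - 1) / lam * E) := by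
      ring
    have e3 : 2 * δ * E = 2 * (δ * E) := by ring
    rw [e1]
    rw [e2] at hkey1
    rw [e3] at hMB
    rw [hmid] at hn₂
    linarith [hn₁, hn₂, hn₃, hkey1, hMB, hE1]
  have hn₃N : n₃ ≤ N₁ := by
    have h1 : ((4 * δ + 4 * 2 ^ (2 * k - 1) / lam + 3) * E) ≤ (N₁ : ℝ) := by
      rw [hN₁]
      exact Nat.le_ceil _
    exact_mod_cast le_trans htot h1
  -- comparison between Yseq and orb
  have hcomp : ∀ n ≤ N₁, -δ ≤ orb f (-δ) n ∧ Yseq lam ε (-δ) k n ≤ orb f (-δ) n := by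
    intro n
    induction n with
    | zero => exact fun _ => ⟨le_refl _, le_of_eq (Yseq_zero _ _ _ _)⟩
    | succ n ih =>
        intro hn
        have hn' : n ≤ N₁ := by omega
        obtain ⟨h1, h2⟩ := ih hn'
        have horb_lt : orb f (-δ) n < δ := hcon n hn'
        have hYlb : -δ ≤ Yseq lam ε (-δ) k n := by
          have := Yseq_mono lam ε (-δ) hlam.le hε.le k (Nat.zero_le n)
          rwa [Yseq_zero] at this
        have hmemY : Yseq lam ε (-δ) k n ∈ Set.Icc (-δ) δ :=
          ⟨hYlb, le_trans h2 horb_lt.le⟩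
        have hmemO : orb f (-δ) n ∈ Set.Icc (-δ) δ := ⟨h1, horb_lt.le⟩
        constructor
        · have hs := hstep n (orb f (-δ) n) hmemO
          have hg := gain_nonneg lam ε hlam.le hε.le k (orb f (-δ) n)
          show -δ ≤ f n (orb f (-δ) n)
          linarith
        · have hf1 := hmono n hmemY hmemO h2
          have hf2 := hstep n _ hmemY
          show Yseq lam ε (-δ) k (n + 1) ≤ f n (orb f (-δ) n)
          rw [Yseq_succ]
          linarith
  obtain ⟨_, hcmp⟩ := hcomp n₃ hn₃N
  have := hcon n₃ hn₃N
  linarith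
end

section
/- Let f : ℝ → ℝ be any function and suppose (x_m) is a sequence with x_0 = -δ, x_{m+1} ≥ x_m + λ x_m^{2k} for all m, where λ > 0, δ > 0, k ≥ 1, and suppose x_m ≤ -ε^{1/(2k)} for all m < M. Then M ≤ ε^{-(2k-1)/(2k)}/(λ(2k-1)) + 1. -/
lemma pow_sub_pow_ge (m : ℕ) (u v : ℝ) (hv : 0 < v) (hvu : v ≤ u) :
    (m + 1 : ℝ) * v ^ m * (u - v) ≤ u ^ (m + 1) - v ^ (m + 1) := by
  induction m with
  | zero => simp
  | succ m ih =>
    have hu : 0 < u := lt_of_lt_of_le hv hvu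
    have h1 : u * ((m + 1 : ℝ) * v ^ m * (u - v)) ≤ u * (u ^ (m+1) - v ^ (m+1)) :=
      mul_le_mul_of_nonneg_left ih hu.le
    have h2 : (0:ℝ) ≤ (m + 1 : ℝ) * v ^ m * ((u - v) * (u - v)) :=
      mul_nonneg (by positivity) (mul_self_nonneg _)
    push_cast
    simp only [pow_succ] at *
    nlinarith [h1, h2]

lemma key (m : ℕ) (u v : ℝ) (hv : 0 < v) (hvu : v ≤ u) :
    (u - v) / u ^ (m + 2) ≤ 1 / ((m+1:ℝ) * v ^ (m+1)) - 1 / ((m+1:ℝ) * u ^ (m+1)) := by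
  have hu : 0 < u := lt_of_lt_of_le hv hvu
  have hA : 1 / ((m+1:ℝ) * v ^ (m+1)) - 1 / ((m+1:ℝ) * u ^ (m+1))
      = (u ^ (m+1) - v ^ (m+1)) / ((m+1:ℝ) * v ^ (m+1) * u ^ (m+1)) := by
    have h3 : (0:ℝ) < v ^ (m+1) := pow_pos hv _
    have h4 : (0:ℝ) < u ^ (m+1) := pow_pos hu _
    field_simp
  rw [hA, div_le_div_iff₀ (by positivity) (by positivity)]
  have hps := pow_sub_pow_ge m u v hv hvu
  have h7 : ((m+1:ℝ) * v ^ m * (u - v)) * u ^ (m+2) ≤ (u ^ (m+1) - v ^ (m+1)) * u ^ (m+2) :=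
    mul_le_mul_of_nonneg_right hps (by positivity)
  have h8 : (0:ℝ) ≤ ((m+1:ℝ) * v ^ m) * ((u - v) * (u - v)) * u ^ (m+1) :=
    mul_nonneg (mul_nonneg (by positivity) (mul_self_nonneg _)) (by positivity)
  simp only [pow_succ] at *
  nlinarith [h7, h8]

theorem stmt2 (k : ℕ) (hk : 1 ≤ k) (δ lam ε : ℝ) (hδ : 0 < δ) (hlam : 0 < lam)
    (hε : 0 < ε) (hεδ : ε < δ ^ (2 * k))
    (x : ℕ → ℝ) (h0 : x 0 = -δ)
    (hstep : ∀ m, x m + lam * x m ^ (2 * k) ≤ x (m + 1))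
    (M : ℕ) (hM : ∀ m < M, x m ≤ -(ε ^ ((1 : ℝ) / (2 * k)))) :
    (M : ℝ) ≤ ε ^ (-(((2 * k : ℝ) - 1) / (2 * k))) / (lam * (2 * k - 1)) + 1 := by
  have hk' : (1:ℝ) ≤ (k:ℝ) := by exact_mod_cast hk
  have hden : (0:ℝ) < 2 * (k:ℝ) - 1 := by linarith
  set t : ℝ := ε ^ ((1 : ℝ) / (2 * k)) with ht_def
  have ht : 0 < t := Real.rpow_pos_of_pos hε _
  set m0 : ℕ := 2 * k - 2 with hm0
  have hm1 : m0 + 2 = 2 * k := by omega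
  have hcast : ((m0:ℝ) + 1) = 2 * (k:ℝ) - 1 := by
    have : (m0:ℝ) = 2 * (k:ℝ) - 2 := by
      have h2 : 2 ≤ 2 * k := by omega
      push_cast [hm0, Nat.cast_sub h2]
      ring
    rw [this]; ring
  set n : ℕ := m0 + 1 with hn
  -- key rpow computation
  have htn : t ^ n = ε ^ ((2 * (k:ℝ) - 1) / (2 * k)) := by
    rw [ht_def, ← Real.rpow_natCast (ε ^ ((1 : ℝ) / (2 * k))) n, ← Real.rpow_mul hε.le]
    congr 1
    have hc2 : ((m0 + 1 : ℕ):ℝ) = 2*(k:ℝ)-1 := by push_cast; linarith [hcast]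
    rw [hn, hc2]; ring
  have hrpow : ε ^ (-(((2 * (k:ℝ)) - 1) / (2 * k))) = (t ^ n)⁻¹ := by
    rw [Real.rpow_neg hε.le, htn]
  set G : ℕ → ℝ := fun j => 1 / ((m0+1:ℝ) * (-(x j)) ^ (m0+1)) with hG
  have hstep' : ∀ j, j + 1 < M → G j + lam ≤ G (j + 1) := by
    intro j hj
    have ha : x j ≤ -t := hM j (by omega)
    have hb : x (j+1) ≤ -t := hM (j+1) hj
    set u : ℝ := -(x j) with hu
    set v : ℝ := -(x (j+1)) with hv
    have hu0 : t ≤ u := by simp [hu]; linarith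
    have hv0 : 0 < v := by simp [hv]; linarith
    have hxpow : x j ^ (2 * k) = u ^ (2 * k) := (Even.neg_pow (even_two_mul k) (x j)).symm
    have hxpos : 0 < u ^ (2 * k) := pow_pos (lt_of_lt_of_le ht hu0) _
    have hvu : v ≤ u := by
      have := hstep j
      have : x j ≤ x (j+1) := by nlinarith [hxpos, hxpow, this]
      simp [hu, hv]; linarith
    have hkey := key m0 u v hv0 hvu
    have hlow : lam ≤ (u - v) / u ^ (m0 + 2) := by
      rw [le_div_iff₀ (pow_pos (lt_of_lt_of_le ht hu0) _)]
      have := hstep j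
      have huv : lam * u ^ (2*k) ≤ u - v := by
        simp only [hu, hv]
        nlinarith [hxpow, this]
      rw [hm1]
      linarith
    have : G j + lam ≤ G j + (u - v) / u ^ (m0+2) := by linarith
    calc G j + lam ≤ G j + (u - v) / u ^ (m0+2) := this
      _ ≤ G j + (1 / ((m0+1:ℝ) * v ^ (m0+1)) - 1 / ((m0+1:ℝ) * u ^ (m0+1))) := by linarith
      _ = G (j+1) := by simp only [hG, hu, hv]; ring
  have main : ∀ j, j < M → G 0 + j * lam ≤ G j := by
    intro j
    induction j with
    | zero => intro _; simp
    | succ j ih =>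
      intro hj
      have h1 := ih (by omega)
      have h2 := hstep' j hj
      push_cast
      linarith
  rcases Nat.eq_zero_or_pos M with hM0 | hM1
  · subst hM0
    simp only [Nat.cast_zero]
    have h1 : 0 ≤ ε ^ (-(((2 * (k:ℝ)) - 1) / (2 * k))) / (lam * (2 * (k:ℝ) - 1)) := by
      apply div_nonneg (Real.rpow_nonneg hε.le _) (by positivity)
    linarith
  · obtain ⟨N, rfl⟩ : ∃ N, M = N + 1 := ⟨M - 1, by omega⟩
    have hmain := main N (by omega)
    have hG0 : 0 ≤ G 0 := by
      rw [hG]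
      simp only [h0, neg_neg]
      positivity
    have hGN : G N ≤ 1 / ((m0+1:ℝ) * t ^ (m0+1)) := by
      have hxN : t ≤ -(x N) := by have := hM N (by omega); linarith
      rw [hG]
      apply one_div_le_one_div_of_le (by positivity)
      have : t ^ (m0+1) ≤ (-(x N)) ^ (m0+1) := pow_le_pow_left₀ ht.le hxN _
      have h9 : (0:ℝ) < (m0:ℝ) + 1 := by positivity
      nlinarith [this]
    have hNle : (N:ℝ) * lam ≤ 1 / ((2 * (k:ℝ) - 1) * t ^ n) := by
      rw [hn, ← hcast]
      linarith
    have hfin : (N:ℝ) ≤ (t ^ n)⁻¹ / (lam * (2 * (k:ℝ) - 1)) := by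
      rw [le_div_iff₀ (mul_pos hlam hden)]
      have htn0 : (0:ℝ) < t ^ n := pow_pos ht n
      have heq : (2*(k:ℝ)-1) * (1 / ((2*(k:ℝ)-1) * t^n)) = (t^n)⁻¹ := by field_simp
      nlinarith [mul_le_mul_of_nonneg_left hNle hden.le, heq]
    push_cast
    rw [hrpow]
    clear_value t m0 n G
    clear hmain hGN hNle main hstep' hM hG0 hεδ hstep h0 hG htn hrpow
    linarith
end

section
/- For λ > 0, x ≥ L > 0, and k ≥ 1: if a sequence satisfies x_{m+1} ≥ x_m + λ x_m^{2k} and x_0 ≥ L, then x_m ≥ 2L after at most ⌈1/(λ L^{2k-1})⌉ steps. Consequently, the total number of steps for such a sequence to go from ε^{1/(2k)} to at least δ is at most n + ε^{-(2k-1)/(2k)} · 2^{2k-1}/(λ(2^{2k-1}-1)), where n = ⌈log₂(δ / ε^{1/(2k)})⌉. -/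
lemma aux_double (k : ℕ) (hk : 1 ≤ k) (lam L : ℝ) (hlam : 0 < lam) (hL : 0 < L)
    (x : ℕ → ℝ) (hstep : ∀ m, x m + lam * x m ^ (2 * k) ≤ x (m + 1)) (h0 : L ≤ x 0) :
    ∃ m ≤ ⌈1 / (lam * L ^ (2 * k - 1))⌉₊, 2 * L ≤ x m := by
  set N := ⌈1 / (lam * L ^ (2 * k - 1))⌉₊ with hN
  by_contra hcon
  push_neg at hcon
  have key : ∀ m, m ≤ N → L + m * (lam * L ^ (2 * k)) ≤ x m := by
    intro m
    induction m with
    | zero => intro _; simpa using h0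
    | succ m ih =>
      intro hm
      have hm' : m ≤ N := Nat.le_of_succ_le hm
      have hx := ih hm'
      have hm0 : (0:ℝ) ≤ (m : ℝ) := Nat.cast_nonneg m
      have hq : (0:ℝ) ≤ lam * L ^ (2 * k) := by positivity
      have hLx : L ≤ x m := by nlinarith
      have hmono : lam * L ^ (2 * k) ≤ lam * x m ^ (2 * k) :=
        mul_le_mul_of_nonneg_left (pow_le_pow_left₀ hL.le hLx _) hlam.le
      have := hstep m
      push_cast
      linarith
  have hA : 0 < lam * L ^ (2 * k - 1) := by positivity
  have hceil : 1 / (lam * L ^ (2 * k - 1)) ≤ (N : ℝ) := Nat.le_ceil _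
  have h1 : 1 ≤ (N : ℝ) * (lam * L ^ (2 * k - 1)) := by
    rw [div_le_iff₀ hA] at hceil; linarith
  have hpow : L ^ (2 * k) = L ^ (2 * k - 1) * L := by
    rw [← pow_succ]; congr 1; omega
  have hxN := key N le_rfl
  have hcN := hcon N le_rfl
  rw [hpow] at hxN
  have h2 : L ≤ (N : ℝ) * (lam * L ^ (2 * k - 1)) * L := by nlinarith
  nlinarith

lemma aux_chain (k : ℕ) (hk : 1 ≤ k) (lam E : ℝ) (hlam : 0 < lam) (hE : 0 < E)
    (x : ℕ → ℝ) (hstep : ∀ m, x m + lam * x m ^ (2 * k) ≤ x (m + 1)) (h0 : E ≤ x 0) :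
    ∀ j : ℕ, ∃ m : ℕ,
      m ≤ ∑ i ∈ Finset.range j, ⌈1 / (lam * (2 ^ i * E) ^ (2 * k - 1))⌉₊ ∧
      2 ^ j * E ≤ x m := by
  intro j
  induction j with
  | zero => exact ⟨0, by simp, by simpa using h0⟩
  | succ j ih =>
    obtain ⟨m, hm, hxm⟩ := ih
    have hE' : (0:ℝ) < 2 ^ j * E := by positivity
    obtain ⟨m', hm', hxm'⟩ := aux_double k hk lam (2 ^ j * E) hlam hE'
      (fun i => x (m + i)) (fun i => by simpa [← Nat.add_assoc] using hstep (m + i)) hxm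
    refine ⟨m + m', ?_, ?_⟩
    · rw [Finset.sum_range_succ]; omega
    · calc (2:ℝ) ^ (j + 1) * E = 2 * (2 ^ j * E) := by ring
        _ ≤ x (m + m') := hxm'

theorem stmt3 (k : ℕ) (hk : 1 ≤ k) (lam L ε δ : ℝ)
    (hlam : 0 < lam) (hL : 0 < L) (hε : 0 < ε) (hδ : 0 < δ)
    (hεδ : ε ^ ((1 : ℝ) / (2 * k)) < δ)
    (x : ℕ → ℝ) (hstep : ∀ m, x m + lam * x m ^ (2 * k) ≤ x (m + 1)) :
    (L ≤ x 0 → ∃ m ≤ ⌈1 / (lam * L ^ (2 * k - 1))⌉₊, 2 * L ≤ x m) ∧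
    (ε ^ ((1 : ℝ) / (2 * k)) ≤ x 0 →
      ∃ m : ℕ, (m : ℝ) ≤ (⌈Real.logb 2 (δ / ε ^ ((1 : ℝ) / (2 * k)))⌉₊ : ℝ) +
          ε ^ (-(((2 * k : ℝ) - 1) / (2 * k))) * 2 ^ (2 * k - 1) /
            (lam * (2 ^ (2 * k - 1) - 1)) ∧
        δ ≤ x m) := by
  constructor
  · exact fun h0 => aux_double k hk lam L hlam hL x hstep h0
  · intro h0
    set E : ℝ := ε ^ ((1 : ℝ) / (2 * k)) with hEdef
    have hEpos : 0 < E := Real.rpow_pos_of_pos hε _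
    set n := ⌈Real.logb 2 (δ / E)⌉₊ with hn
    obtain ⟨m, hm, hxm⟩ := aux_chain k hk lam E hlam hEpos x hstep h0 n
    set p := 2 * k - 1 with hpdef
    have hp1 : 1 ≤ p := by omega
    have h2p : (2 : ℝ) ≤ 2 ^ p := by
      calc (2:ℝ) = 2 ^ 1 := (pow_one 2).symm
        _ ≤ 2 ^ p := pow_le_pow_right₀ (by norm_num) hp1
    have h2p0 : (0:ℝ) < 2 ^ p := by positivity
    set r : ℝ := ((2:ℝ) ^ p)⁻¹ with hrdef
    have hr0 : 0 ≤ r := by positivity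
    have hr1 : r < 1 := by
      rw [hrdef, inv_lt_one_iff₀]; right; linarith
    have hrne : r ≠ 1 := ne_of_lt hr1
    set c : ℝ := (lam * E ^ p)⁻¹ with hcdef
    have hc0 : 0 < c := by positivity
    refine ⟨m, ?_, ?_⟩
    · -- the counting bound
      have hterm : ∀ i, (1 : ℝ) / (lam * (2 ^ i * E) ^ p) = c * r ^ i := by
        intro i
        have : ((2:ℝ) ^ i) ^ p = ((2:ℝ) ^ p) ^ i := by
          rw [← pow_mul, ← pow_mul, Nat.mul_comm]
        rw [hcdef, hrdef, mul_pow, this]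
        field_simp
        ring_nf
        rw [← mul_pow, inv_mul_cancel₀ (by norm_num : (2:ℝ) ≠ 0), one_pow]
      have hgeom : ∑ i ∈ Finset.range n, r ^ i ≤ (1 - r)⁻¹ := by
        have h1r : (0:ℝ) < 1 - r := by linarith
        have hrn : (0:ℝ) ≤ r ^ n := by positivity
        have heq : (r ^ n - 1) / (r - 1) = (1 - r ^ n) / (1 - r) := by
          rw [div_eq_div_iff (by linarith) (by linarith)]; ring
        calc ∑ i ∈ Finset.range n, r ^ i = (r ^ n - 1) / (r - 1) := geom_sum_eq hrne n
          _ = (1 - r ^ n) / (1 - r) := heq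
          _ ≤ 1 / (1 - r) := by gcongr; linarith
          _ = (1 - r)⁻¹ := one_div _
      have hsum : (m : ℝ) ≤ (n : ℝ) + c * (1 - r)⁻¹ := by
        calc (m : ℝ) ≤ ((∑ i ∈ Finset.range n, ⌈1 / (lam * (2 ^ i * E) ^ p)⌉₊ : ℕ) : ℝ) := by
              exact_mod_cast hm
          _ = ∑ i ∈ Finset.range n, ((⌈1 / (lam * (2 ^ i * E) ^ p)⌉₊ : ℕ) : ℝ) := by
              push_cast; ring
          _ ≤ ∑ i ∈ Finset.range n, (1 / (lam * (2 ^ i * E) ^ p) + 1) := by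
              refine Finset.sum_le_sum fun i _ => ?_
              exact (Nat.ceil_lt_add_one (by positivity)).le
          _ = (∑ i ∈ Finset.range n, c * r ^ i) + n := by
              rw [Finset.sum_add_distrib]
              simp [hterm]
          _ = (n : ℝ) + c * ∑ i ∈ Finset.range n, r ^ i := by
              rw [Finset.mul_sum]; ring
          _ ≤ (n : ℝ) + c * (1 - r)⁻¹ := by
              have := mul_le_mul_of_nonneg_left hgeom hc0.le
              linarith
      -- identify the constant
      have hEp : E ^ p = ε ^ (((p : ℝ)) / (2 * k)) := by
        rw [hEdef, ← Real.rpow_natCast (ε ^ ((1:ℝ)/(2*k))) p, ← Real.rpow_mul hε.le]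
        congr 1; ring
      have hpc : ((p : ℝ)) = 2 * (k : ℝ) - 1 := by
        rw [hpdef]; push_cast [Nat.cast_sub (by omega : 1 ≤ 2 * k)]; ring
      have hexp : ε ^ (-(((2 * k : ℝ) - 1) / (2 * k))) = (E ^ p)⁻¹ := by
        rw [hEp, ← Real.rpow_neg hε.le]
        congr 1
        rw [hpc]
      have hEpne : E ^ p ≠ 0 := by positivity
      have h2pm1 : (0:ℝ) < 2 ^ p - 1 := by linarith
      have hconst : c * (1 - r)⁻¹ = ε ^ (-(((2 * k : ℝ) - 1) / (2 * k))) * 2 ^ p /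
          (lam * (2 ^ p - 1)) := by
        rw [hexp, hcdef, hrdef]
        field_simp
      rw [hconst] at hsum
      exact hsum
    · -- δ ≤ x m
      have h1 : Real.logb 2 (δ / E) ≤ (n : ℝ) := Nat.le_ceil _
      have h2 : δ / E ≤ 2 ^ (n : ℝ) := by
        calc δ / E = 2 ^ Real.logb 2 (δ / E) :=
              (Real.rpow_logb (by norm_num) (by norm_num) (by positivity)).symm
          _ ≤ 2 ^ (n : ℝ) := Real.rpow_le_rpow_of_exponent_le (by norm_num) h1
      rw [Real.rpow_natCast] at h2
      rw [div_le_iff₀ hEpos] at h2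
      calc δ ≤ 2 ^ n * E := h2
        _ ≤ x m := hxm
end
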